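/- Let n ≥ 1, let C ⊆ [0,1] be the standard ternary (1/3-)Cantor set, let X = C × [0,1]^n with the Euclidean metric, let Y be a metric space, and let f : X → Y be a (λ,α,β)-bi-Hölder homeomorphism. Let μ denote the (log 2/log 3)-dimensional Hausdorff measure restricted to C. Then there exists a constant A > 0 such that for every subset U ⊆ Y, μ({x ∈ C : f({x} × [0,1]^n) ∩ U ≠ ∅}) ≤ A·(diam U)^{log 2/(α·log 3)}. -/

import Mathlib

open MeasureTheory
open scoped ENNReal

/-- The set `C × [0,1]^n` inside Euclidean space `ℝ^{n+1}`, where `C` is the standard ternary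
Cantor set (coordinate `0`) and the remaining `n` coordinates range over `[0,1]`. -/
def cantorCube (n : ℕ) : Set (EuclideanSpace ℝ (Fin (n + 1))) :=
  {x | x 0 ∈ cantorSet ∧ ∀ i : Fin (n + 1), i ≠ 0 → x i ∈ Set.Icc (0 : ℝ) 1}


noncomputable def cE (k : ℕ) (σ : Fin k → Bool) : ℝ :=
  ∑ i, (if σ i then (2:ℝ) else 0) * (1/3)^(i.1+1)

lemma cE_nonneg (k : ℕ) (σ : Fin k → Bool) : 0 ≤ cE k σ :=
  Finset.sum_nonneg fun i _ => by positivity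

lemma cE_geom (k : ℕ) : ∑ i : Fin k, (2:ℝ) * (1/3)^(i.1+1) = 1 - (1/3)^k := by
  induction k with
  | zero => simp
  | succ k ih =>
    rw [Fin.sum_univ_castSucc]
    simp only [Fin.coe_castSucc, Fin.val_last]
    rw [ih]; ring

lemma cE_le (k : ℕ) (σ : Fin k → Bool) : cE k σ ≤ 1 - (1/3)^k := by
  have h : cE k σ ≤ ∑ i : Fin k, (2:ℝ) * (1/3)^(i.1+1) := by
    apply Finset.sum_le_sum
    intro i _
    by_cases h : σ i <;> simp [h]
  rw [cE_geom] at h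
  exact h

lemma cE_cons (k : ℕ) (b : Bool) (σ : Fin k → Bool) :
    cE (k+1) (Fin.cons b σ) = (if b then (2:ℝ) else 0)/3 + cE k σ / 3 := by
  unfold cE
  rw [Fin.sum_univ_succ]
  simp only [Fin.cons_zero, Fin.cons_succ, Fin.val_zero, Fin.val_succ]
  rw [Finset.sum_div]
  congr 1
  · ring
  · exact Finset.sum_congr rfl fun i _ => by ring

lemma cE_sep : ∀ (k : ℕ) (σ τ : Fin k → Bool), σ ≠ τ → 2*(1/3:ℝ)^k ≤ |cE k σ - cE k τ| := by
  intro k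
  induction k with
  | zero =>
    intro σ τ hne
    exact absurd (funext fun i => i.elim0) hne
  | succ k ih =>
    intro σ τ hne
    have hσ := Fin.cons_self_tail σ
    have hτ := Fin.cons_self_tail τ
    rw [← hσ, ← hτ, cE_cons, cE_cons]
    have hb1 := cE_nonneg k (Fin.tail σ)
    have hb2 := cE_nonneg k (Fin.tail τ)
    have hb3 := cE_le k (Fin.tail σ)
    have hb4 := cE_le k (Fin.tail τ)
    have hp : (0:ℝ) < (1/3)^k := by positivity
    by_cases hb : σ 0 = τ 0
    · have htne : Fin.tail σ ≠ Fin.tail τ := by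
        intro h
        apply hne
        rw [← hσ, ← hτ, hb, h]
      have := ih (Fin.tail σ) (Fin.tail τ) htne
      rw [hb]
      have : 2*(1/3:ℝ)^k / 3 ≤ |cE k (Fin.tail σ) / 3 - cE k (Fin.tail τ) / 3| := by
        rw [div_sub_div_same, abs_div]
        rw [abs_of_pos (by norm_num : (0:ℝ) < 3)]
        linarith [this]
      calc 2*(1/3:ℝ)^(k+1) = 2*(1/3)^k/3 := by ring
        _ ≤ _ := by
          rw [add_sub_add_left_eq_sub]
          exact this
    · have hle : (1/3:ℝ)^k ≤ 1 := by
        apply pow_le_one₀ <;> norm_num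
      have key : ∀ x y : ℝ, 0 ≤ x → x ≤ 1 - (1/3:ℝ)^k → 0 ≤ y → y ≤ 1 - (1/3:ℝ)^k →
          2*(1/3:ℝ)^(k+1) ≤ |2/3 + x/3 - (0/3 + y/3)| := by
        intro x y hx hx' hy hy'
        rw [abs_of_nonneg (by linarith)]
        have h3 : 2*(1/3:ℝ)^(k+1) = 2*(1/3)^k/3 := by ring
        linarith
      rcases Bool.eq_false_or_eq_true (σ 0) with h1 | h1 <;>
        rcases Bool.eq_false_or_eq_true (τ 0) with h2 | h2 <;>
        simp only [h1, h2, Bool.false_eq_true, Bool.true_eq_false, if_true, if_false] at hb ⊢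
      · exact absurd trivial hb
      · exact key _ _ hb1 hb3 hb2 hb4
      · rw [abs_sub_comm]
        exact key _ _ hb2 hb4 hb1 hb3
      · exact absurd trivial hb
lemma card_le_of_sep {ι : Type*} [DecidableEq ι] (s : Finset ι) (g : ι → ℝ) (δ A B : ℝ)
    (hδ : 0 < δ) (hAB : A ≤ B)
    (hsep : ∀ i ∈ s, ∀ j ∈ s, i ≠ j → δ ≤ |g i - g j|)
    (hmem : ∀ i ∈ s, g i ∈ Set.Icc A B) :
    (s.card : ℝ) ≤ (B - A)/δ + 1 := by
  classical
  set h : ι → ℤ := fun i => ⌊(g i - A)/δ⌋ with hh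
  have hinj : Set.InjOn h s := by
    intro i hi j hj hij
    by_contra hne
    have h1 := hsep i hi j hj hne
    have h2 : |(g i - A)/δ - (g j - A)/δ| < 1 := Int.abs_sub_lt_one_of_floor_eq_floor hij
    rw [div_sub_div_same, show g i - A - (g j - A) = g i - g j by ring, abs_div,
      abs_of_pos hδ, div_lt_one hδ] at h2
    linarith
  have hsub : s.image h ⊆ Finset.Icc 0 ⌊(B - A)/δ⌋ := by
    intro z hz
    rcases Finset.mem_image.1 hz with ⟨i, hi, rfl⟩
    rcases hmem i hi with ⟨hA, hB⟩
    rw [Finset.mem_Icc]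
    constructor
    · exact Int.floor_nonneg.2 (by apply div_nonneg _ hδ.le; linarith)
    · exact Int.floor_le_floor (by apply div_le_div_of_nonneg_right _ hδ.le; linarith)
  have hcard : s.card ≤ (⌊(B - A)/δ⌋ + 1).toNat := by
    rw [← Finset.card_image_of_injOn hinj]
    refine (Finset.card_le_card hsub).trans ?_
    rw [Int.card_Icc]
    simp
  have h0 : (0:ℤ) ≤ ⌊(B - A)/δ⌋ := Int.floor_nonneg.2 (by apply div_nonneg _ hδ.le; linarith)
  calc (s.card : ℝ) ≤ ((⌊(B - A)/δ⌋ + 1).toNat : ℝ) := by exact_mod_cast hcard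
    _ = (⌊(B - A)/δ⌋ : ℝ) + 1 := by
        have : ((⌊(B - A)/δ⌋ + 1).toNat : ℤ) = ⌊(B - A)/δ⌋ + 1 := Int.toNat_of_nonneg (by linarith)
        exact_mod_cast congrArg (Int.cast : ℤ → ℝ) this
    _ ≤ (B - A)/δ + 1 := by linarith [Int.floor_le ((B - A)/δ)]
lemma third_rpow : ((1/3:ℝ)) ^ (Real.log 2 / Real.log 3) = 1/2 := by
  have h3 : (0:ℝ) < Real.log 3 := Real.log_pos (by norm_num)
  rw [Real.rpow_def_of_pos (by norm_num)]
  rw [Real.log_div (by norm_num) (by norm_num), Real.log_one]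
  rw [show (0 - Real.log 3) * (Real.log 2 / Real.log 3) = -Real.log 2 by field_simp; ring]
  rw [Real.exp_neg, Real.exp_log (by norm_num)]
  norm_num

lemma third_pow_rpow (k : ℕ) : ((1/3:ℝ)^k) ^ (Real.log 2 / Real.log 3) = (1/2:ℝ)^k := by
  rw [← Real.rpow_natCast (1/3 : ℝ) k, ← Real.rpow_mul (by norm_num), mul_comm,
    Real.rpow_mul (by norm_num), third_rpow, Real.rpow_natCast]

lemma cE_append (m k : ℕ) (σ : Fin m → Bool) (τ : Fin k → Bool) :
    cE (m+k) (Fin.append σ τ) = cE m σ + (1/3)^m * cE k τ := by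
  unfold cE
  rw [Fin.sum_univ_add]
  simp only [Fin.append_left, Fin.append_right, Fin.coe_castAdd, Fin.coe_natAdd]
  rw [Finset.mul_sum]
  congr 1
  apply Finset.sum_congr rfl
  intro i _
  rw [pow_add]
  ring

lemma image_div3_Icc (a b : ℝ) : (· / 3) '' Set.Icc a b = Set.Icc (a/3) (b/3) := by
  ext x
  constructor
  · rintro ⟨y, hy, rfl⟩
    exact ⟨by linarith [hy.1], by linarith [hy.2]⟩
  · rintro ⟨h1, h2⟩
    exact ⟨3*x, ⟨by linarith, by linarith⟩, by ring⟩

lemma image_add2div3_Icc (a b : ℝ) :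
    (fun x => (2 + x) / 3) '' Set.Icc a b = Set.Icc ((2+a)/3) ((2+b)/3) := by
  ext x
  constructor
  · rintro ⟨y, hy, rfl⟩
    exact ⟨by linarith [hy.1], by linarith [hy.2]⟩
  · rintro ⟨h1, h2⟩
    exact ⟨3*x - 2, ⟨by linarith, by linarith⟩, by ring⟩

lemma iUnion_bool_cons {k : ℕ} (S : (Fin (k+1) → Bool) → Set ℝ) :
    ⋃ σ, S σ = (⋃ σ : Fin k → Bool, S (Fin.cons false σ)) ∪ ⋃ σ : Fin k → Bool, S (Fin.cons true σ) := by
  apply Set.Subset.antisymm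
  · refine Set.iUnion_subset fun σ => ?_
    rw [← Fin.cons_self_tail σ]
    cases h : σ 0
    · exact Set.subset_union_of_subset_left (Set.subset_iUnion (fun τ => S (Fin.cons false τ)) (Fin.tail σ)) _
    · exact Set.subset_union_of_subset_right (Set.subset_iUnion (fun τ => S (Fin.cons true τ)) (Fin.tail σ)) _
  · apply Set.union_subset <;>
      exact Set.iUnion_subset fun σ => Set.subset_iUnion S _

lemma preCantorSet_eq (k : ℕ) :
    preCantorSet k = ⋃ σ : Fin k → Bool, Set.Icc (cE k σ) (cE k σ + (1/3)^k) := by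
  induction k with
  | zero =>
    simp only [preCantorSet_zero, pow_zero]
    have h0 : ∀ σ : Fin 0 → Bool, cE 0 σ = 0 := fun σ => by simp [cE]
    ext x
    simp only [Set.mem_iUnion, h0, zero_add, Set.mem_Icc]
    exact ⟨fun h => ⟨fun i => i.elim0, h⟩, fun ⟨_, h⟩ => h⟩
  | succ k ih =>
    rw [preCantorSet_succ, ih, Set.image_iUnion, Set.image_iUnion]
    rw [iUnion_bool_cons (fun σ => Set.Icc (cE (k+1) σ) (cE (k+1) σ + (1/3)^(k+1)))]
    congr 1
    · apply Set.iUnion_congr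
      intro σ
      rw [image_div3_Icc, cE_cons]
      norm_num
      congr 1
      ring
    · apply Set.iUnion_congr
      intro σ
      rw [image_add2div3_Icc, cE_cons]
      simp only [if_true]
      congr 1 <;> ring

open Filter Topology in
lemma cantor_window (c L : ℝ) (hL : 0 ≤ L) (m : ℕ) :
    μH[Real.log 2 / Real.log 3] (cantorSet ∩ Set.Icc c (c+L)) ≤
      ENNReal.ofReal (min (L/(2*(1/3)^m) + 3/2) (2^m) * (1/2)^m) := by
  classical
  set s := Real.log 2 / Real.log 3 with hs
  set T : Finset (Fin m → Bool) :=
    Finset.univ.filter (fun σ => c - (1/3:ℝ)^m ≤ cE m σ ∧ cE m σ ≤ c + L) with hT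
  have hpowpos : ∀ j : ℕ, (0:ℝ) < (1/3)^j := fun j => by positivity
  -- the covering bound
  have key : μH[s] (cantorSet ∩ Set.Icc c (c+L)) ≤ ENNReal.ofReal (T.card * (1/2:ℝ)^m) := by
    have hr : Tendsto (fun n : ℕ => ENNReal.ofReal ((1/3:ℝ)^(m+n))) atTop (𝓝 0) := by
      rw [← ENNReal.ofReal_zero]
      apply ENNReal.tendsto_ofReal
      have h0 : Tendsto (fun n : ℕ => (1/3:ℝ)^m * (1/3)^n) atTop (𝓝 ((1/3:ℝ)^m * 0)) :=
        (tendsto_pow_atTop_nhds_zero_of_lt_one (by norm_num) (by norm_num)).const_mul _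
      simpa [pow_add] using h0
    have hbd := Measure.hausdorffMeasure_le_liminf_sum (ι := fun n : ℕ => {σ // σ ∈ T} × (Fin n → Bool)) s
      (cantorSet ∩ Set.Icc c (c+L)) (fun n => ENNReal.ofReal ((1/3:ℝ)^(m+n))) hr
      (fun n i => Set.Icc (cE (m+n) (Fin.append i.1.1 i.2))
        (cE (m+n) (Fin.append i.1.1 i.2) + (1/3)^(m+n)))
      (Eventually.of_forall fun n i => by
        rw [Real.ediam_Icc, add_sub_cancel_left])
      (Eventually.of_forall fun n => ?_)
    · refine hbd.trans ?_
      have hconst : (fun n : ℕ => ∑ i : {σ // σ ∈ T} × (Fin n → Bool),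
          Metric.ediam (Set.Icc (cE (m+n) (Fin.append i.1.1 i.2))
            (cE (m+n) (Fin.append i.1.1 i.2) + (1/3:ℝ)^(m+n))) ^ s)
          = fun _ : ℕ => ENNReal.ofReal (T.card * (1/2:ℝ)^m) := by
        funext n
        have hterm : ∀ i : {σ // σ ∈ T} × (Fin n → Bool),
            Metric.ediam (Set.Icc (cE (m+n) (Fin.append i.1.1 i.2))
              (cE (m+n) (Fin.append i.1.1 i.2) + (1/3:ℝ)^(m+n))) ^ s
            = ENNReal.ofReal ((1/2:ℝ)^(m+n)) := by
          intro i
          rw [Real.ediam_Icc, add_sub_cancel_left,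
            ENNReal.ofReal_rpow_of_pos (hpowpos (m+n)), hs, third_pow_rpow]
        rw [Finset.sum_congr rfl fun i _ => hterm i, Finset.sum_const, Finset.card_univ]
        rw [Fintype.card_prod, Fintype.card_coe, Fintype.card_fun]
        simp only [Fintype.card_bool, Fintype.card_fin]
        rw [nsmul_eq_mul, ← ENNReal.ofReal_natCast, ← ENNReal.ofReal_mul (by positivity)]
        congr 1
        push_cast
        have h2n : (2:ℝ)^n * (1/2)^n = 1 := by
          rw [← mul_pow]; norm_num
        rw [pow_add]
        linear_combination ((T.card : ℝ) * (1/2:ℝ)^m) * h2n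
      rw [hconst, liminf_const]
    · -- covering property
      intro x hx
      obtain ⟨hxC, hxI⟩ := hx
      have hxP : x ∈ preCantorSet (m+n) := Set.mem_iInter.1 hxC (m+n)
      rw [preCantorSet_eq] at hxP
      obtain ⟨ρ, hρ⟩ := Set.mem_iUnion.1 hxP
      obtain ⟨hx1, hx2⟩ := hρ
      set σ : Fin m → Bool := fun i => ρ (Fin.castAdd n i) with hσ
      set τ : Fin n → Bool := fun j => ρ (Fin.natAdd m j) with hτ
      have happ : Fin.append σ τ = ρ := Fin.append_castAdd_natAdd
      have hcE : cE (m+n) ρ = cE m σ + (1/3)^m * cE n τ := by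
        rw [← happ, cE_append]
      have hτ0 : 0 ≤ cE n τ := cE_nonneg n τ
      have hτ1 : cE n τ ≤ 1 - (1/3)^n := cE_le n τ
      have hpa : (1/3:ℝ)^(m+n) = (1/3)^m * (1/3)^n := pow_add _ _ _
      have hσT : σ ∈ T := by
        rw [hT, Finset.mem_filter]
        refine ⟨Finset.mem_univ _, ?_, ?_⟩
        · nlinarith [hxI.1, hpowpos m, hpowpos n]
        · nlinarith [hxI.2, hpowpos m, hpowpos n]
      apply Set.mem_iUnion.2
      refine ⟨(⟨σ, hσT⟩, τ), ?_⟩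
      simp only [happ]
      exact ⟨hx1, hx2⟩
  refine key.trans (ENNReal.ofReal_le_ofReal ?_)
  have hcard1 : (T.card : ℝ) ≤ L/(2*(1/3)^m) + 3/2 := by
    have hsep : ∀ σ ∈ T, ∀ τ ∈ T, σ ≠ τ → 2*(1/3:ℝ)^m ≤ |cE m σ - cE m τ| :=
      fun σ _ τ _ h => cE_sep m σ τ h
    have hmem : ∀ σ ∈ T, cE m σ ∈ Set.Icc (c - (1/3:ℝ)^m) (c + L) := by
      intro σ hσ
      rw [hT, Finset.mem_filter] at hσ
      exact ⟨hσ.2.1, hσ.2.2⟩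
    have h := card_le_of_sep T (cE m) (2*(1/3)^m) (c - (1/3)^m) (c+L)
      (by positivity) (by linarith [hpowpos m]) hsep hmem
    have heq : (c + L - (c - (1/3:ℝ)^m))/(2*(1/3)^m) + 1 = L/(2*(1/3)^m) + 3/2 := by
      have hne : ((1/3:ℝ)^m) ≠ 0 := (hpowpos m).ne'
      field_simp
      ring
    linarith [h, heq.le, heq.ge]
  have hcard2 : (T.card : ℝ) ≤ 2^m := by
    have h1 : T.card ≤ (Finset.univ : Finset (Fin m → Bool)).card := Finset.card_le_card (Finset.filter_subset _ _)
    have h2 : (Finset.univ : Finset (Fin m → Bool)).card = 2^m := by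
      rw [Finset.card_univ, Fintype.card_fun]
      simp
    rw [h2] at h1
    exact_mod_cast h1
  exact mul_le_mul_of_nonneg_right (le_min hcard1 hcard2) (by positivity)

lemma s_nonneg : 0 ≤ Real.log 2 / Real.log 3 :=
  div_nonneg (Real.log_nonneg one_le_two) (Real.log_nonneg (by norm_num))

lemma cantor_total : μH[Real.log 2 / Real.log 3] cantorSet ≤ 1 := by
  have h1 : cantorSet ⊆ cantorSet ∩ Set.Icc 0 (0+1) := by
    intro x hx
    exact ⟨hx, by simpa using cantorSet_subset_unitInterval hx⟩
  refine (measure_mono h1).trans ((cantor_window 0 1 zero_le_one 0).trans ?_)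
  norm_num

lemma cantor_window' (c D : ℝ) (hD : 0 < D) :
    μH[Real.log 2 / Real.log 3] (cantorSet ∩ Set.Icc c (c+2*D)) ≤
      ENNReal.ofReal ((9/2) * D ^ (Real.log 2 / Real.log 3)) := by
  set s := Real.log 2 / Real.log 3 with hs
  by_cases hD1 : 1 ≤ D
  · have hDs : 1 ≤ D ^ s := by
      calc (1:ℝ) = 1 ^ s := (Real.one_rpow s).symm
        _ ≤ D ^ s := Real.rpow_le_rpow zero_le_one hD1 s_nonneg
    refine (measure_mono Set.inter_subset_left).trans (cantor_total.trans ?_)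
    have hDs' : (1:ℝ) ≤ D ^ s := by
      calc (1:ℝ) = 1 ^ s := (Real.one_rpow s).symm
        _ ≤ D ^ s := Real.rpow_le_rpow zero_le_one hD1 s_nonneg
    exact ENNReal.one_le_ofReal.2 (by linarith)
  · push_neg at hD1
    have hex : ∃ n : ℕ, (1/3:ℝ)^n ≤ D := by
      obtain ⟨n, hn⟩ := exists_pow_lt_of_lt_one hD (by norm_num : (1/3:ℝ) < 1)
      exact ⟨n, hn.le⟩
    classical
    set m := Nat.find hex with hm
    have hm1 : (1/3:ℝ)^m ≤ D := Nat.find_spec hex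
    have hmpos : m ≠ 0 := by
      intro h0
      rw [h0] at hm1
      simp at hm1
      linarith
    have hm2 : D < 3 * (1/3:ℝ)^m := by
      have hlt := Nat.find_min hex (Nat.pred_lt hmpos)
      push_neg at hlt
      have hlt' : D < (1/3:ℝ)^(m-1) := hlt
      have hsucc : m - 1 + 1 = m := Nat.succ_pred_eq_of_ne_zero hmpos
      have h31 : (1/3:ℝ)^(m-1) = 3 * (1/3)^m := by
        calc (1/3:ℝ)^(m-1) = 3 * ((1/3)^(m-1) * (1/3)) := by ring
          _ = 3 * (1/3)^(m-1+1) := by rw [pow_succ]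
          _ = 3 * (1/3)^m := by rw [hsucc]
      linarith
    have hpow : (0:ℝ) < (1/3)^m := by positivity
    refine (cantor_window c (2*D) (by linarith) m).trans (ENNReal.ofReal_le_ofReal ?_)
    have hmin : min (2*D/(2*(1/3:ℝ)^m) + 3/2) (2^m) ≤ 9/2 := by
      refine (min_le_left _ _).trans ?_
      have : 2*D/(2*(1/3:ℝ)^m) = D/(1/3)^m := by ring
      rw [this]
      have : D/(1/3:ℝ)^m < 3 := by
        rw [div_lt_iff₀ hpow]
        linarith
      linarith
    have hhalf : ((1/2:ℝ))^m ≤ D ^ s := by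
      rw [← third_pow_rpow m]
      exact Real.rpow_le_rpow hpow.le hm1 s_nonneg
    have hminpos : 0 ≤ min (2*D/(2*(1/3:ℝ)^m) + 3/2) (2^m) := by
      refine le_min (by positivity) (by positivity)
    nlinarith [pow_pos (by norm_num : (0:ℝ) < 1/2) m]
lemma cantorCube_coord_mem {n : ℕ} (p : ↥(cantorCube n)) (i : Fin (n+1)) :
    (p : EuclideanSpace ℝ (Fin (n+1))) i ∈ Set.Icc (0:ℝ) 1 := by
  by_cases h : i = 0
  · subst h
    exact cantorSet_subset_unitInterval p.2.1
  · exact p.2.2 i h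

lemma coord_dist_le {n : ℕ} (p q : EuclideanSpace ℝ (Fin (n+1))) (i : Fin (n+1)) :
    |p i - q i| ≤ dist p q := by
  rw [EuclideanSpace.dist_eq]
  have h1 : |p i - q i| = Real.sqrt (dist (p i) (q i) ^ 2) := by
    rw [Real.sqrt_sq_eq_abs, Real.dist_eq]
    exact (abs_abs _).symm
  rw [h1]
  apply Real.sqrt_le_sqrt
  exact Finset.single_le_sum (f := fun j => dist (p j) (q j) ^ 2)
    (fun j _ => sq_nonneg _) (Finset.mem_univ i)

lemma eucl_dist_le {n : ℕ} (p q : ↥(cantorCube n)) : dist p q ≤ (n:ℝ) + 1 := by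
  rw [Subtype.dist_eq, EuclideanSpace.dist_eq]
  have hb : ∀ i : Fin (n+1), dist ((p:EuclideanSpace ℝ (Fin (n+1))) i) ((q:EuclideanSpace ℝ (Fin (n+1))) i) ^ 2 ≤ 1 := by
    intro i
    have h1 := cantorCube_coord_mem p i
    have h2 := cantorCube_coord_mem q i
    rw [Real.dist_eq]
    have : |(p:EuclideanSpace ℝ (Fin (n+1))) i - (q:EuclideanSpace ℝ (Fin (n+1))) i| ≤ 1 := by
      rw [abs_le]
      constructor <;> [linarith [h1.1, h2.2]; linarith [h1.2, h2.1]]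
    nlinarith [abs_nonneg ((p:EuclideanSpace ℝ (Fin (n+1))) i - (q:EuclideanSpace ℝ (Fin (n+1))) i)]
  have hsum : ∑ i, dist ((p:EuclideanSpace ℝ (Fin (n+1))) i) ((q:EuclideanSpace ℝ (Fin (n+1))) i) ^ 2 ≤ (n:ℝ)+1 := by
    calc ∑ i, dist ((p:EuclideanSpace ℝ (Fin (n+1))) i) ((q:EuclideanSpace ℝ (Fin (n+1))) i) ^ 2
        ≤ ∑ _i : Fin (n+1), (1:ℝ) := Finset.sum_le_sum fun i _ => hb i
      _ = (n:ℝ)+1 := by simp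
  calc Real.sqrt (∑ i, dist ((p:EuclideanSpace ℝ (Fin (n+1))) i) ((q:EuclideanSpace ℝ (Fin (n+1))) i) ^ 2)
      ≤ Real.sqrt ((n:ℝ)+1) := Real.sqrt_le_sqrt hsum
    _ ≤ (n:ℝ)+1 := by
        have h := Real.sqrt_le_sqrt (show ((n:ℝ)+1) ≤ ((n:ℝ)+1)^2 by nlinarith [Nat.cast_nonneg (α := ℝ) n])
        rwa [Real.sqrt_sq (by positivity)] at h


/-- Let `f : C × [0,1]^n → Y` be a `(l, a, b)`-bi-Hölder homeomorphism and
let `μ` be the `(log 2 / log 3)`-dimensional Hausdorff measure restricted to the Cantor set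
`C`. Then there is `A > 0` such that for every `U ⊆ Y`, the `μ`-measure of the set of `x ∈ C`
whose fibre `f({x} × [0,1]^n)` meets `U` is at most `A · (diam U)^{log 2 / (a log 3)}`. -/
theorem statement16 (n : ℕ) (hn : 1 ≤ n) {Y : Type*} [MetricSpace Y]
    (l a b : ℝ) (hl : 0 < l) (ha : 0 < a) (hb : 0 < b)
    (f : ↥(cantorCube n) → Y) (hsurj : Function.Surjective f)
    (hf : ∀ x y : ↥(cantorCube n),
      (1 / l) * dist x y ^ a ≤ dist (f x) (f y) ∧
        dist (f x) (f y) ≤ l * dist x y ^ b) :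
    ∃ A : ℝ, 0 < A ∧ ∀ U : Set Y,
      (μH[Real.log 2 / Real.log 3] : Measure ℝ).restrict cantorSet
          {x : ℝ | x ∈ cantorSet ∧
            ∃ p : ↥(cantorCube n), (p : EuclideanSpace ℝ (Fin (n + 1))) 0 = x ∧ f p ∈ U} ≤
        ENNReal.ofReal (A * Metric.diam U ^ (Real.log 2 / (a * Real.log 3))) := by
  set s := Real.log 2 / Real.log 3 with hs
  have hs_pos : 0 < s := div_pos (Real.log_pos one_lt_two) (Real.log_pos (by norm_num))
  refine ⟨(9/2) * l ^ (s * a⁻¹), by positivity, fun U => ?_⟩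
  set SU : Set ℝ := {x : ℝ | x ∈ cantorSet ∧
    ∃ p : ↥(cantorCube n), (p : EuclideanSpace ℝ (Fin (n + 1))) 0 = x ∧ f p ∈ U} with hSU
  by_cases hne : SU.Nonempty
  · obtain ⟨x₀, hx₀C, p₀, hp₀, hfp₀⟩ := hne
    have hUb : Bornology.IsBounded U := by
      rw [Metric.isBounded_iff]
      refine ⟨l * ((n:ℝ)+1) ^ b, fun u hu v hv => ?_⟩
      obtain ⟨p, rfl⟩ := hsurj u
      obtain ⟨q, rfl⟩ := hsurj v
      refine (hf p q).2.trans ?_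
      exact mul_le_mul_of_nonneg_left
        (Real.rpow_le_rpow dist_nonneg (eucl_dist_le p q) hb.le) hl.le
    set dU := Metric.diam U with hdU
    have hdU0 : 0 ≤ dU := Metric.diam_nonneg
    have hdist_le : ∀ p : ↥(cantorCube n), f p ∈ U → dist p p₀ ^ a ≤ l * dU := by
      intro p hfp
      have hd1 : dist (f p) (f p₀) ≤ dU := Metric.dist_le_diam_of_mem hUb hfp hfp₀
      have h1 := (hf p p₀).1
      calc dist p p₀ ^ a = l * ((1/l) * dist p p₀ ^ a) := by field_simp
        _ ≤ l * dU := mul_le_mul_of_nonneg_left (h1.trans hd1) hl.le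
    by_cases hd : dU = 0
    · have hsub : SU ⊆ {x₀} := by
        rintro x ⟨hxC, p, hp, hfp⟩
        have h2 : dist p p₀ ^ a ≤ 0 := by
          have := hdist_le p hfp
          rw [hd] at this
          linarith
        have h3 : dist p p₀ = 0 := by
          by_contra hne0
          have hpos : 0 < dist p p₀ := lt_of_le_of_ne dist_nonneg (Ne.symm hne0)
          linarith [Real.rpow_pos_of_pos hpos a]
        have hpq : p = p₀ := by rwa [dist_eq_zero] at h3
        simp only [Set.mem_singleton_iff]
        rw [← hp, ← hp₀, hpq]
      haveI := Measure.noAtoms_hausdorff ℝ hs_pos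
      calc (μH[s] : Measure ℝ).restrict cantorSet SU ≤ μH[s] SU :=
            Measure.restrict_apply_le _ _
        _ ≤ μH[s] {x₀} := measure_mono hsub
        _ = 0 := measure_singleton x₀
        _ ≤ _ := zero_le
    · have hdUpos : 0 < dU := lt_of_le_of_ne hdU0 (Ne.symm hd)
      set D := (l * dU) ^ (a⁻¹ : ℝ) with hD
      have hDpos : 0 < D := Real.rpow_pos_of_pos (by positivity) _
      have hsub : SU ⊆ cantorSet ∩ Set.Icc (x₀ - D) ((x₀ - D) + 2*D) := by
        rintro x ⟨hxC, p, hp, hfp⟩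
        refine ⟨hxC, ?_⟩
        have h3 : dist p p₀ ≤ D := by
          have h4 : (dist p p₀ ^ a) ^ (a⁻¹:ℝ) ≤ D :=
            Real.rpow_le_rpow (Real.rpow_nonneg dist_nonneg a) (hdist_le p hfp) (by positivity)
          rwa [Real.rpow_rpow_inv dist_nonneg ha.ne'] at h4
        have hxx : |x - x₀| ≤ D := by
          rw [← hp, ← hp₀]
          refine (coord_dist_le _ _ 0).trans ?_
          rw [← Subtype.dist_eq]
          exact h3
        rw [abs_le] at hxx
        rw [Set.mem_Icc]
        constructor <;> linarith [hxx.1, hxx.2]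
      have heq : (9/2) * D ^ s = (9/2) * l ^ (s * a⁻¹) * dU ^ (Real.log 2 / (a * Real.log 3)) := by
        have e1 : D ^ s = (l * dU) ^ (a⁻¹ * s) := by
          rw [hD, ← Real.rpow_mul (by positivity)]
        have e2 : (l * dU) ^ (a⁻¹ * s) = l ^ (a⁻¹ * s) * dU ^ (a⁻¹ * s) :=
          Real.mul_rpow hl.le hdU0
        have e3 : Real.log 2 / (a * Real.log 3) = a⁻¹ * s := by rw [hs]; ring
        rw [e1, e2, e3, mul_comm (a⁻¹) s]
        ring
      calc (μH[s] : Measure ℝ).restrict cantorSet SU ≤ μH[s] SU :=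
            Measure.restrict_apply_le _ _
        _ ≤ μH[s] (cantorSet ∩ Set.Icc (x₀ - D) ((x₀ - D) + 2*D)) := measure_mono hsub
        _ ≤ ENNReal.ofReal ((9/2) * D ^ s) := cantor_window' (x₀ - D) D hDpos
        _ = _ := by rw [heq]
  · rw [Set.not_nonempty_iff_eq_empty] at hne
    rw [hSU] at hne ⊢
    rw [hne]
    simp only [measure_empty]
    exact zero_le
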